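/- Let ν ≥ 2, let ω ∈ ℝ^ν be non-resonant with ω_i ∈ (1/2,1] for all i, let b = ν − 1, and let 0 ≤ s < b/2. For a finitely supported a : ℤ^ν → ℂ define for n ∈ ℤ^ν and t ∈ ℝ the first Picard iterate coefficient c_a(t, n) = ∑_{(n₁,n₂,n₃): n₁ − n₂ + n₃ = n} a_{n₁} \overline{a_{n₂}} a_{n₃} · ∫_0^t e^{i s (⟨n₁⟩_ω² − ⟨n₂⟩_ω² + ⟨n₃⟩_ω² − ⟨n⟩_ω²)} ds. Then there is NO constant K > 0 such that for every finitely supported a : ℤ^ν → ℂ, sup_{t ∈ [0,1]} ( ∑_{n ∈ ℤ^ν} (1+|n|)^{2s} |c_a(t,n)|² )^{1/2} ≤ K · ( ∑_{n ∈ ℤ^ν} (1+|n|)^{2s} |a_n|² )^{3/2}. (Failure of the first Picard iterate bound for the cubic NLS with quasi-periodic data in 𝓗^s_Λ for s < b/2; this shows C³-ill-posedness below s = b/2, Proposition 6.2 in dimension d = 1.) -/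

import Mathlib

open MeasureTheory Filter

/-- The frequency `⟨n⟩_ω = n · ω` of a lattice point `n ∈ ℤ^ν`. -/
noncomputable def freqQP {ν : ℕ} (ω : Fin ν → ℝ) (n : Fin ν → ℤ) : ℝ :=
  ∑ i, (n i : ℝ) * ω i

/-- The height `|n|` (Euclidean norm) of a lattice point `n ∈ ℤ^ν`. -/
noncomputable def heightQP {ν : ℕ} (n : Fin ν → ℤ) : ℝ :=
  Real.sqrt (∑ i, ((n i : ℝ)) ^ 2)

/-- The `n`-th Fourier coefficient `c_a(t,n)` of the first Picard iterate of the
cubic NLS with quasi-periodic initial datum `∑ₙ aₙ e^{i⟨n⟩_ω x}`, with the free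
phase removed. -/
noncomputable def picardCoeff {ν : ℕ} (ω : Fin ν → ℝ) (a : (Fin ν → ℤ) → ℂ)
    (t : ℝ) (n : Fin ν → ℤ) : ℂ :=
  ∑' m : (Fin ν → ℤ) × (Fin ν → ℤ) × (Fin ν → ℤ),
    if m.1 - m.2.1 + m.2.2 = n then
      a m.1 * (starRingEnd ℂ) (a m.2.1) * a m.2.2 *
        ∫ s in (0 : ℝ)..t,
          Complex.exp (Complex.I *
            ((s * (freqQP ω m.1 ^ 2 - freqQP ω m.2.1 ^ 2 + freqQP ω m.2.2 ^ 2
                - freqQP ω n ^ 2) : ℝ) : ℂ))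
    else 0

namespace PicardAnalytic

lemma re_phase_aux (c s θ : ℝ) (hθ : θ ≠ 0) :
    (((c:ℂ) + (s:ℂ)*Complex.I - 1)/(Complex.I*(θ:ℂ))) =
      ((s/θ : ℝ) : ℂ) + (((1-c)/θ : ℝ):ℂ)*Complex.I := by
  have hθC : (θ:ℂ) ≠ 0 := by exact_mod_cast hθ
  have hne : Complex.I*(θ:ℂ) ≠ 0 := by simp [hθC, Complex.I_ne_zero]
  rw [div_eq_iff hne]
  push_cast
  field_simp
  ring_nf
  rw [Complex.I_sq]
  ring

lemma re_phase (θ : ℝ) (hθ : θ ≠ 0) :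
    ((Complex.exp (Complex.I * θ * (1/3)) - 1) / (Complex.I * θ)).re
      = Real.sin (θ/3) / θ := by
  have h2 : Complex.I * (θ:ℂ) * (1/3) = ((θ/3 : ℝ):ℂ) * Complex.I := by push_cast; ring
  rw [h2, Complex.exp_mul_I, ← Complex.ofReal_cos, ← Complex.ofReal_sin,
    re_phase_aux _ _ _ hθ]
  simp only [Complex.add_re, Complex.ofReal_re, Complex.mul_re, Complex.I_re,
    Complex.I_im, Complex.ofReal_im]
  ring

lemma sin_div_ge (u : ℝ) (h0 : 0 < u) (h2 : u ≤ 2) : u/6 ≤ Real.sin (u/3) := by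
  have hx : 0 < u/3 := by linarith
  have hx1 : u/3 ≤ 1 := by linarith
  have h := Real.sin_gt_sub_cube hx
  have h4 : 0 ≤ u*(2-u)*(2+u) :=
    mul_nonneg (mul_nonneg h0.le (by linarith)) (by linarith)
  have hcube : (u/3)^3/4 ≤ (u/3)/9 := by nlinarith
  linarith

lemma integral_phase_eq (θ : ℝ) (hθ : θ ≠ 0) :
    (∫ s in (0:ℝ)..(1/3), Complex.exp (Complex.I * ((s * θ : ℝ) : ℂ)))
      = (Complex.exp (Complex.I * θ * (1/3)) - 1) / (Complex.I * θ) := by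
  have h1 : ∀ s : ℝ, Complex.I * ((s * θ : ℝ) : ℂ) = (Complex.I * θ) * s := by
    intro s; push_cast; ring
  simp_rw [h1]
  rw [integral_exp_mul_complex (by simp [hθ, Complex.I_ne_zero])]
  norm_num

lemma sin_ratio_ge (θ : ℝ) (h0 : θ ≠ 0) (hθ : |θ| ≤ 2) :
    (1:ℝ)/6 ≤ Real.sin (θ/3) / θ := by
  rcases lt_or_gt_of_ne h0 with hneg | hpos
  · have h2 : -θ ≤ 2 := by rw [abs_of_neg hneg] at hθ; linarith
    have := sin_div_ge (-θ) (by linarith) h2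
    rw [show (-θ)/3 = -(θ/3) by ring, Real.sin_neg] at this
    rw [le_div_iff_of_neg hneg]
    linarith
  · have h2 : θ ≤ 2 := by rw [abs_of_pos hpos] at hθ; linarith
    have := sin_div_ge θ hpos h2
    rw [le_div_iff₀ hpos]
    linarith

lemma re_integral_phase_ge (θ : ℝ) (hθ : |θ| ≤ 2) :
    (1:ℝ)/6 ≤ (∫ s in (0:ℝ)..(1/3), Complex.exp (Complex.I * ((s * θ : ℝ) : ℂ))).re := by
  rcases eq_or_ne θ 0 with rfl | h0
  · simp
    norm_num
  · rw [integral_phase_eq θ h0, re_phase θ h0]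
    exact sin_ratio_ge θ h0 hθ

end PicardAnalytic

namespace PicardCE

variable {N : ℕ} [NeZero N]

/-- adjust the 0-th coordinate to bring the frequency close to `Tv * ω 0`. -/
noncomputable def adjust (ω : Fin N → ℝ) (Tv : ℤ) (m : Fin N → ℤ) : Fin N → ℤ :=
  fun i => if i = 0 then Tv - round ((∑ j, (m j : ℝ) * ω j) / ω 0) else m i

noncomputable def box (N L : ℕ) [NeZero N] : Finset (Fin N → ℤ) :=
  Fintype.piFinset (fun i => if i = 0 then {0} else Finset.Ico (0:ℤ) L)

lemma mem_box {L : ℕ} {m : Fin N → ℤ} :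
    m ∈ box N L ↔ m 0 = 0 ∧ ∀ i, i ≠ 0 → 0 ≤ m i ∧ m i < L := by
  simp only [box, Fintype.mem_piFinset]
  constructor
  · intro h
    refine ⟨by simpa using h 0, fun i hi => ?_⟩
    have := h i
    rw [if_neg hi] at this
    simpa [Finset.mem_Ico] using this
  · rintro ⟨h0, h⟩ i
    by_cases hi : i = 0
    · subst hi; simp [h0]
    · rw [if_neg hi]; simp [Finset.mem_Ico]; exact h i hi

lemma card_box (L : ℕ) : (box N L).card = L ^ (N - 1) := by
  rw [box, Fintype.card_piFinset]
  rw [← Finset.mul_prod_erase _ _ (Finset.mem_univ (0 : Fin N))]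
  rw [if_pos rfl]
  have : ∀ i ∈ Finset.univ.erase (0 : Fin N),
      ((if i = 0 then ({0} : Finset ℤ) else Finset.Ico (0:ℤ) L)).card = L := by
    intro i hi
    rw [if_neg (Finset.ne_of_mem_erase hi)]
    simp
  rw [Finset.prod_congr rfl this, Finset.prod_const, Finset.card_erase_of_mem (Finset.mem_univ _)]
  simp

lemma freqQP_split (ω : Fin N → ℝ) (n : Fin N → ℤ) :
    freqQP ω n = (n 0 : ℝ) * ω 0 + ∑ j ∈ Finset.univ.erase 0, (n j : ℝ) * ω j := by
  rw [freqQP, ← Finset.add_sum_erase _ _ (Finset.mem_univ (0 : Fin N))]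

lemma freqQP_adjust (ω : Fin N → ℝ) (Tv : ℤ) (m : Fin N → ℤ) (hm : m 0 = 0) :
    freqQP ω (adjust ω Tv m)
      = ((Tv : ℝ) - round ((freqQP ω m) / ω 0)) * ω 0 + freqQP ω m := by
  set r : ℤ := round ((freqQP ω m) / ω 0) with hr
  have hfm : freqQP ω m = ∑ j ∈ Finset.univ.erase 0, (m j : ℝ) * ω j := by
    rw [freqQP_split ω m, hm]; push_cast; ring
  have h1 : ∀ j ∈ Finset.univ.erase (0 : Fin N),
      ((adjust ω Tv m j : ℝ)) * ω j = (m j : ℝ) * ω j := by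
    intro j hj
    rw [adjust, if_neg (Finset.ne_of_mem_erase hj)]
  have h2 : adjust ω Tv m 0 = Tv - r := by
    rw [adjust, if_pos rfl, hr, freqQP]
  rw [freqQP_split ω (adjust ω Tv m), Finset.sum_congr rfl h1, ← hfm, h2]
  push_cast
  ring

omit [NeZero N] in
lemma freqQP_sub_add (ω : Fin N → ℝ) (x y z : Fin N → ℤ) :
    freqQP ω (x - y + z) = freqQP ω x - freqQP ω y + freqQP ω z := by
  rw [freqQP, freqQP, freqQP, freqQP, ← Finset.sum_sub_distrib, ← Finset.sum_add_distrib]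
  refine Finset.sum_congr rfl fun i _ => ?_
  simp only [Pi.add_apply, Pi.sub_apply]
  push_cast
  ring


section Main

variable {ω : Fin N → ℝ} {L : ℕ}
  (hω : ∀ i, ω i ∈ Set.Ioc (1 / 2 : ℝ) 1) (hL : 1 ≤ L)

/-- the shift in the 0-coordinate -/
def Tv (N L : ℕ) : ℤ := 10 * N * L

noncomputable def Sfin (ω : Fin N → ℝ) (L : ℕ) [NeZero N] : Finset (Fin N → ℤ) :=
  (box N L).image (adjust ω (Tv N L))

/-- projection killing the 0-th coordinate -/
def pr (n : Fin N → ℤ) : Fin N → ℤ := fun i => if i = 0 then 0 else n i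

lemma pr_apply (n : Fin N → ℤ) (i : Fin N) : pr n i = if i = 0 then 0 else n i := rfl

lemma freqQP_pr (n : Fin N → ℤ) :
    freqQP ω n = (n 0 : ℝ) * ω 0 + freqQP ω (pr n) := by
  rw [freqQP_split ω n, freqQP_split ω (pr n)]
  have h0 : pr n 0 = 0 := by rw [pr_apply, if_pos rfl]
  rw [h0]
  have : ∀ j ∈ Finset.univ.erase (0 : Fin N),
      ((pr n j : ℝ)) * ω j = (n j : ℝ) * ω j := by
    intro j hj
    rw [pr_apply, if_neg (Finset.ne_of_mem_erase hj)]
  rw [Finset.sum_congr rfl this]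
  simp


include hω hL

lemma freq_box_bounds {m : Fin N → ℤ} (hm : m ∈ box N L) :
    0 ≤ freqQP ω m ∧ freqQP ω m ≤ N * L := by
  obtain ⟨h0, hco⟩ := mem_box.mp hm
  constructor
  · apply Finset.sum_nonneg
    intro i _
    by_cases hi : i = 0
    · subst hi; rw [h0]; simp
    · exact mul_nonneg (by exact_mod_cast (hco i hi).1) (by linarith [(hω i).1])
  · rw [freqQP]
    calc ∑ i, (m i : ℝ) * ω i ≤ ∑ _i : Fin N, (L : ℝ) := by
          apply Finset.sum_le_sum
          intro i _
          by_cases hi : i = 0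
          · subst hi; rw [h0]; simp
          · obtain ⟨h1, h2⟩ := hco i hi
            have hm1 : (m i : ℝ) ≤ (L : ℝ) := by exact_mod_cast h2.le
            have hm0 : (0:ℝ) ≤ (m i : ℝ) := by exact_mod_cast h1
            calc (m i : ℝ) * ω i ≤ (L:ℝ) * 1 :=
              mul_le_mul hm1 (hω i).2 (by linarith [(hω i).1]) (by positivity)
            _ = L := by ring
      _ = N * L := by simp [Finset.sum_const, mul_comm]

lemma round_box_bounds {m : Fin N → ℤ} (hm : m ∈ box N L) :
    0 ≤ round ((freqQP ω m) / ω 0) ∧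
      round ((freqQP ω m) / ω 0) ≤ 2 * N * L + 1 := by
  obtain ⟨hf0, hfub⟩ := freq_box_bounds hω hL hm
  obtain ⟨hω0l, hω0u⟩ := hω 0
  have hω0pos : (0:ℝ) < ω 0 := by linarith
  set x := (freqQP ω m) / ω 0 with hx
  have hx0 : 0 ≤ x := div_nonneg hf0 hω0pos.le
  have hxub : x ≤ 2 * N * L := by
    rw [hx, div_le_iff₀ hω0pos]
    have hNL : (0:ℝ) ≤ (N:ℝ) * L := by positivity
    nlinarith
  have har := abs_sub_round x
  rw [abs_le] at har
  constructor
  · have h1 : (-1 : ℝ) < (round x : ℝ) := by linarith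
    have : (-1 : ℤ) < round x := by exact_mod_cast h1
    omega
  · have h1 : (round x : ℝ) < ((2 * N * L + 1 : ℤ) : ℝ) := by push_cast; linarith
    exact_mod_cast h1.le

lemma mem_Sfin_props {n : Fin N → ℤ} (hn : n ∈ Sfin ω L) :
    |freqQP ω n - (Tv N L : ℝ) * ω 0| ≤ 1/2 ∧
    (∀ i, i ≠ 0 → 0 ≤ n i ∧ n i < L) ∧
    Tv N L - (2 * N * L + 1) ≤ n 0 ∧ n 0 ≤ Tv N L := by
  obtain ⟨m, hm, rfl⟩ := Finset.mem_image.mp hn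
  obtain ⟨h0, hco⟩ := mem_box.mp hm
  obtain ⟨hrl, hru⟩ := round_box_bounds hω hL hm
  obtain ⟨hω0l, hω0u⟩ := hω 0
  have hω0pos : (0:ℝ) < ω 0 := by linarith
  refine ⟨?_, ?_, ?_, ?_⟩
  · rw [freqQP_adjust ω _ m h0]
    have har := abs_sub_round ((freqQP ω m) / ω 0)
    have : |((Tv N L : ℝ) - round ((freqQP ω m) / ω 0)) * ω 0 + freqQP ω m
        - (Tv N L : ℝ) * ω 0| = |(freqQP ω m) / ω 0 - round ((freqQP ω m) / ω 0)| * |ω 0| := by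
      rw [← abs_mul]
      congr 1
      field_simp
      ring
    rw [this, abs_of_pos hω0pos]
    calc |(freqQP ω m) / ω 0 - round ((freqQP ω m) / ω 0)| * ω 0 ≤ (1/2) * 1 := by
          apply mul_le_mul har hω0u hω0pos.le (by norm_num)
      _ = 1/2 := by ring
  · intro i hi
    rw [adjust, if_neg hi]
    exact hco i hi
  · rw [adjust, if_pos rfl, show (∑ j, (m j:ℝ) * ω j) = freqQP ω m from rfl]
    omega
  · rw [adjust, if_pos rfl, show (∑ j, (m j:ℝ) * ω j) = freqQP ω m from rfl]
    omega

omit hω hL in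
lemma card_Sfin : (Sfin ω L).card = L ^ (N - 1) := by
  rw [Sfin, Finset.card_image_of_injOn, card_box]
  intro m hm m' hm' heq
  obtain ⟨h0, _⟩ := mem_box.mp hm
  obtain ⟨h0', _⟩ := mem_box.mp hm'
  funext i
  by_cases hi : i = 0
  · subst hi; rw [h0, h0']
  · have := congrFun heq i
    rwa [adjust, adjust, if_neg hi, if_neg hi] at this

noncomputable def Ofin (ω : Fin N → ℝ) (L : ℕ) [NeZero N] : Finset (Fin N → ℤ) :=
  ((Sfin ω L) ×ˢ (Sfin ω L) ×ˢ (Sfin ω L)).image (fun m => m.1 - m.2.1 + m.2.2)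

lemma mem_Ofin_props {n : Fin N → ℤ} (hn : n ∈ Ofin ω L) :
    |freqQP ω n - (Tv N L : ℝ) * ω 0| ≤ 3/2 ∧
    (∀ i, i ≠ 0 → -(L:ℤ) ≤ n i ∧ n i ≤ 2*L) ∧
    (L : ℤ) ≤ n 0 := by
  obtain ⟨m, hm, rfl⟩ := Finset.mem_image.mp hn
  rw [Finset.mem_product] at hm
  obtain ⟨h1, h2⟩ := hm
  rw [Finset.mem_product] at h2
  obtain ⟨h2, h3⟩ := h2
  obtain ⟨hf1, hc1, hz1l, hz1u⟩ := mem_Sfin_props hω hL h1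
  obtain ⟨hf2, hc2, hz2l, hz2u⟩ := mem_Sfin_props hω hL h2
  obtain ⟨hf3, hc3, hz3l, hz3u⟩ := mem_Sfin_props hω hL h3
  have hNpos : 1 ≤ N := Nat.one_le_iff_ne_zero.mpr (NeZero.ne N)
  have hPL : (L:ℤ) ≤ (N:ℤ) * L := by
    have : (1:ℤ) ≤ (N:ℤ) := by exact_mod_cast hNpos
    nlinarith [Int.ofNat_nonneg L]
  refine ⟨?_, ?_, ?_⟩
  · rw [freqQP_sub_add]
    rw [abs_le] at hf1 hf2 hf3 ⊢
    constructor <;> [skip; skip] <;> · obtain ⟨a1,b1⟩ := hf1; obtain ⟨a2,b2⟩ := hf2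
                                       obtain ⟨a3,b3⟩ := hf3; linarith
  · intro i hi
    obtain ⟨c1l, c1u⟩ := hc1 i hi
    obtain ⟨c2l, c2u⟩ := hc2 i hi
    obtain ⟨c3l, c3u⟩ := hc3 i hi
    simp only [Pi.add_apply, Pi.sub_apply]
    omega
  · simp only [Pi.add_apply, Pi.sub_apply]
    rw [Tv] at hz1l hz1u hz2l hz2u hz3l hz3u
    have hL1 : (1:ℤ) ≤ (L:ℤ) := by exact_mod_cast hL
    push_cast at hz1l hz1u hz2l hz2u hz3l hz3u ⊢
    linarith

lemma card_Ofin : (Ofin ω L).card ≤ 9 * (3 * L + 1) ^ (N - 1) := by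
  classical
  set target : Finset ((Fin N → ℤ) × ℤ) :=
    (Fintype.piFinset (fun i : Fin N => if i = 0 then ({0} : Finset ℤ)
      else Finset.Icc (-(L:ℤ)) (2*L))) ×ˢ Finset.Icc (-4 : ℤ) 4 with htarget
  have hcard : target.card = (3 * L + 1) ^ (N - 1) * 9 := by
    rw [htarget, Finset.card_product, Fintype.card_piFinset]
    have h1 : ∀ i ∈ Finset.univ.erase (0 : Fin N),
        ((if i = 0 then ({0} : Finset ℤ) else Finset.Icc (-(L:ℤ)) (2*L))).card
          = 3 * L + 1 := by
      intro i hi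
      rw [if_neg (Finset.ne_of_mem_erase hi), Int.card_Icc]
      omega
    rw [← Finset.mul_prod_erase _ _ (Finset.mem_univ (0 : Fin N)), if_pos rfl,
      Finset.prod_congr rfl h1, Finset.prod_const,
      Finset.card_erase_of_mem (Finset.mem_univ _)]
    simp [Int.card_Icc]
  have hinj : Set.InjOn
      (fun n : Fin N → ℤ => (pr n, n 0 + round (freqQP ω (pr n) / ω 0) - Tv N L))
      ↑(Ofin ω L) := by
    intro n _ n' _ heq
    simp only [Prod.mk.injEq] at heq
    obtain ⟨hpr, hd⟩ := heq
    funext i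
    by_cases hi : i = 0
    · subst hi
      rw [hpr] at hd
      omega
    · have := congrFun hpr i
      rwa [pr_apply, pr_apply, if_neg hi, if_neg hi] at this
  have hmaps : ∀ n ∈ Ofin ω L,
      (pr n, n 0 + round (freqQP ω (pr n) / ω 0) - Tv N L) ∈ target := by
    intro n hn
    obtain ⟨hf, hco, _⟩ := mem_Ofin_props hω hL hn
    rw [htarget, Finset.mem_product]
    constructor
    · rw [Fintype.mem_piFinset]
      intro i
      dsimp only
      by_cases hi : i = 0
      · subst hi; simp [pr_apply]
      · simp only [pr_apply, if_neg hi, Finset.mem_Icc]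
        exact ⟨(hco i hi).1, (hco i hi).2⟩
    · dsimp only
      rw [Finset.mem_Icc]
      obtain ⟨hω0l, hω0u⟩ := hω 0
      have hω0pos : (0:ℝ) < ω 0 := by linarith
      set φ := freqQP ω (pr n) with hφ
      have hsplit := freqQP_pr (ω := ω) n
      have h3 : |(n 0 : ℝ) - Tv N L + φ / ω 0| ≤ 3 := by
        rw [abs_le] at hf
        rw [hsplit] at hf
        have key : ((n 0 : ℝ) - Tv N L + φ / ω 0) * ω 0
            = (n 0 : ℝ) * ω 0 + φ - (Tv N L : ℝ) * ω 0 := by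
          field_simp
          ring
        rw [abs_le]
        constructor
        · nlinarith [hf.1, hf.2]
        · nlinarith [hf.1, hf.2]
      have hr := abs_sub_round (φ / ω 0)
      rw [abs_le] at h3 hr
      have hub : ((n 0 + round (φ / ω 0) - Tv N L : ℤ) : ℝ) ≤ 4 := by
        push_cast
        linarith
      have hlb : (-4 : ℝ) ≤ ((n 0 + round (φ / ω 0) - Tv N L : ℤ) : ℝ) := by
        push_cast
        linarith
      constructor
      · exact_mod_cast hlb
      · exact_mod_cast hub
  calc (Ofin ω L).card ≤ target.card := Finset.card_le_card_of_injOn _ hmaps hinj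
    _ = (3 * L + 1) ^ (N - 1) * 9 := hcard
    _ = 9 * (3 * L + 1) ^ (N - 1) := by ring

omit hω hL in
lemma sum_count :
    ∑ n ∈ Ofin ω L, (((Sfin ω L) ×ˢ (Sfin ω L) ×ˢ (Sfin ω L)).filter
      (fun m => m.1 - m.2.1 + m.2.2 = n)).card = (L ^ (N - 1)) ^ 3 := by
  classical
  have h := Finset.card_eq_sum_card_fiberwise
    (f := fun m : (Fin N → ℤ) × (Fin N → ℤ) × (Fin N → ℤ) => m.1 - m.2.1 + m.2.2)
    (s := (Sfin ω L) ×ˢ (Sfin ω L) ×ˢ (Sfin ω L)) (t := Ofin ω L)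
    (fun m hm => Finset.mem_image_of_mem _ hm)
  rw [Finset.card_product, Finset.card_product, card_Sfin] at h
  rw [← h]
  ring


noncomputable def aQP (ω : Fin N → ℝ) (L : ℕ) [NeZero N] : (Fin N → ℤ) → ℂ :=
  fun n => if n ∈ Sfin ω L then (1:ℂ) else 0

noncomputable def countT (ω : Fin N → ℝ) (L : ℕ) [NeZero N] (n : Fin N → ℤ) : ℕ :=
  (((Sfin ω L) ×ˢ (Sfin ω L) ×ˢ (Sfin ω L)).filter
    (fun m => m.1 - m.2.1 + m.2.2 = n)).card

omit hω hL in
lemma picard_eq_zero {n : Fin N → ℤ} (hn : n ∉ Ofin ω L) :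
    picardCoeff ω (aQP ω L) (1/3) n = 0 := by
  rw [picardCoeff]
  convert tsum_zero with m
  by_cases hc : m.1 - m.2.1 + m.2.2 = n
  · rw [if_pos hc]
    by_cases h1 : m.1 ∈ Sfin ω L
    · by_cases h2 : m.2.1 ∈ Sfin ω L
      · by_cases h3 : m.2.2 ∈ Sfin ω L
        · exact absurd (by
            rw [← hc]
            exact Finset.mem_image_of_mem _
              (Finset.mem_product.mpr ⟨h1, Finset.mem_product.mpr ⟨h2, h3⟩⟩)) hn
        · simp [aQP, h3]
      · simp [aQP, h2]
    · simp [aQP, h1]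
  · rw [if_neg hc]

lemma picard_re_ge (n : Fin N → ℤ) :
    ((countT ω L n : ℝ))/6 ≤ (picardCoeff ω (aQP ω L) (1/3) n).re := by
  classical
  set S := Sfin ω L with hS
  set F : (Fin N → ℤ) × (Fin N → ℤ) × (Fin N → ℤ) → ℂ := fun m =>
    if m.1 - m.2.1 + m.2.2 = n then
      aQP ω L m.1 * (starRingEnd ℂ) (aQP ω L m.2.1) * aQP ω L m.2.2 *
        ∫ t in (0 : ℝ)..(1/3), Complex.exp (Complex.I *
            ((t * (freqQP ω m.1 ^ 2 - freqQP ω m.2.1 ^ 2 + freqQP ω m.2.2 ^ 2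
                - freqQP ω n ^ 2) : ℝ) : ℂ))
    else 0 with hF
  have hzero : ∀ m ∉ S ×ˢ S ×ˢ S, F m = 0 := by
    intro m hm
    simp only [hF]
    by_cases hc : m.1 - m.2.1 + m.2.2 = n
    · rw [if_pos hc]
      by_cases h1 : m.1 ∈ S
      · by_cases h2 : m.2.1 ∈ S
        · by_cases h3 : m.2.2 ∈ S
          · exact absurd
              (Finset.mem_product.mpr ⟨h1, Finset.mem_product.mpr ⟨h2, h3⟩⟩) hm
          · simp [aQP, ← hS, h3]
        · simp [aQP, ← hS, h2]
      · simp [aQP, ← hS, h1]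
    · rw [if_neg hc]
  have htsum : picardCoeff ω (aQP ω L) (1/3) n = ∑ m ∈ S ×ˢ S ×ˢ S, F m := by
    rw [picardCoeff]
    exact tsum_eq_sum hzero
  rw [htsum, Complex.re_sum]
  have hterm : ∀ m ∈ S ×ˢ S ×ˢ S,
      (if m.1 - m.2.1 + m.2.2 = n then (1:ℝ)/6 else 0) ≤ (F m).re := by
    intro m hm
    rw [Finset.mem_product] at hm
    obtain ⟨h1, h23⟩ := hm
    rw [Finset.mem_product] at h23
    obtain ⟨h2, h3⟩ := h23
    by_cases hc : m.1 - m.2.1 + m.2.2 = n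
    · simp only [hF, if_pos hc]
      have ha1 : aQP ω L m.1 = 1 := by rw [aQP, if_pos (hS ▸ h1)]
      have ha2 : aQP ω L m.2.1 = 1 := by rw [aQP, if_pos (hS ▸ h2)]
      have ha3 : aQP ω L m.2.2 = 1 := by rw [aQP, if_pos (hS ▸ h3)]
      rw [ha1, ha2, ha3, map_one, mul_one, one_mul, one_mul]
      set θ := freqQP ω m.1 ^ 2 - freqQP ω m.2.1 ^ 2 + freqQP ω m.2.2 ^ 2
          - freqQP ω n ^ 2 with hθ
      have hfn : freqQP ω n = freqQP ω m.1 - freqQP ω m.2.1 + freqQP ω m.2.2 := by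
        rw [← hc, freqQP_sub_add]
      have hident : θ = 2 * (freqQP ω m.1 - freqQP ω m.2.1)
          * (freqQP ω m.2.1 - freqQP ω m.2.2) := by
        rw [hθ, hfn]; ring
      have hb1 := (mem_Sfin_props hω hL (hS ▸ h1)).1
      have hb2 := (mem_Sfin_props hω hL (hS ▸ h2)).1
      have hb3 := (mem_Sfin_props hω hL (hS ▸ h3)).1
      rw [abs_le] at hb1 hb2 hb3
      have habs : |θ| ≤ 2 := by
        rw [hident, abs_mul, abs_mul, abs_two]
        have e1 : |freqQP ω m.1 - freqQP ω m.2.1| ≤ 1 := by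
          rw [abs_le]; constructor <;> linarith [hb1.1, hb1.2, hb2.1, hb2.2]
        have e2 : |freqQP ω m.2.1 - freqQP ω m.2.2| ≤ 1 := by
          rw [abs_le]; constructor <;> linarith [hb2.1, hb2.2, hb3.1, hb3.2]
        nlinarith [abs_nonneg (freqQP ω m.1 - freqQP ω m.2.1),
          abs_nonneg (freqQP ω m.2.1 - freqQP ω m.2.2)]
      exact PicardAnalytic.re_integral_phase_ge θ habs
    · simp only [hF, if_neg hc]
      exact le_refl 0
  calc ((countT ω L n : ℝ))/6
      = ∑ m ∈ (S ×ˢ S ×ˢ S).filter (fun m => m.1 - m.2.1 + m.2.2 = n), (1:ℝ)/6 := by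
        rw [Finset.sum_const, countT, hS]
        rw [nsmul_eq_mul]
        ring
    _ = ∑ m ∈ S ×ˢ S ×ˢ S, (if m.1 - m.2.1 + m.2.2 = n then (1:ℝ)/6 else 0) := by
        rw [Finset.sum_filter]
    _ ≤ ∑ m ∈ S ×ˢ S ×ˢ S, (F m).re := Finset.sum_le_sum hterm


omit hω hL in
lemma heightQP_nonneg (n : Fin N → ℤ) : 0 ≤ heightQP n := Real.sqrt_nonneg _

omit hω hL in
lemma heightQP_ge_zero_coord (n : Fin N → ℤ) : ((n 0 : ℝ)) ≤ heightQP n := by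
  have h1 : ((n 0:ℝ))^2 ≤ ∑ i, ((n i:ℝ))^2 :=
    Finset.single_le_sum (f := fun i => ((n i:ℝ))^2) (fun i _ => sq_nonneg _) (Finset.mem_univ (0 : Fin N))
  calc (n 0 : ℝ) ≤ |(n 0 : ℝ)| := le_abs_self _
    _ = Real.sqrt (((n 0:ℝ))^2) := (Real.sqrt_sq_eq_abs _).symm
    _ ≤ heightQP n := Real.sqrt_le_sqrt h1

omit hω hL in
lemma heightQP_le (n : Fin N → ℤ) (C : ℝ) (hC : ∀ i, |(n i : ℝ)| ≤ C) :
    heightQP n ≤ N * C := by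
  have hC0 : 0 ≤ C := le_trans (abs_nonneg _) (hC 0)
  have hN1 : (1:ℝ) ≤ N := by
    have := Nat.one_le_iff_ne_zero.mpr (NeZero.ne N)
    exact_mod_cast this
  rw [heightQP]
  have h1 : ∑ i, ((n i:ℝ))^2 ≤ ∑ _i : Fin N, C^2 := by
    apply Finset.sum_le_sum
    intro i _
    calc ((n i:ℝ))^2 = |(n i:ℝ)|^2 := (sq_abs _).symm
      _ ≤ C^2 := pow_le_pow_left₀ (abs_nonneg _) (hC i) 2
  have h2 : (∑ _i : Fin N, C^2) = N * C^2 := by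
    rw [Finset.sum_const]
    simp [nsmul_eq_mul]
  calc Real.sqrt (∑ i, ((n i:ℝ))^2) ≤ Real.sqrt ((N:ℝ) * C^2) := by
        apply Real.sqrt_le_sqrt; rw [← h2]; exact h1
    _ ≤ Real.sqrt (((N:ℝ) * C)^2) := by
        apply Real.sqrt_le_sqrt
        nlinarith
    _ = (N:ℝ) * C := Real.sqrt_sq (by positivity)

end Main
end PicardCE

lemma sq_helper {A B K : ℝ} (hA : 0 ≤ A) (hB : 0 ≤ B) (hK : 0 ≤ K)
    (h : A ^ ((1:ℝ)/2) ≤ K * B ^ ((3:ℝ)/2)) : A ≤ K^2 * B^3 := by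
  have h1 := pow_le_pow_left₀ (Real.rpow_nonneg hA _) h 2
  have e1 : (A ^ ((1:ℝ)/2))^2 = A := by
    rw [← Real.rpow_natCast (A ^ ((1:ℝ)/2)) 2, ← Real.rpow_mul hA]
    norm_num
  have e2 : (K * B ^ ((3:ℝ)/2))^2 = K^2 * B^3 := by
    rw [mul_pow, ← Real.rpow_natCast (B ^ ((3:ℝ)/2)) 2, ← Real.rpow_mul hB,
      show ((3:ℝ)/2) * ((2:ℕ):ℝ) = ((3:ℕ):ℝ) by norm_num, Real.rpow_natCast]
  rw [e1, e2] at h1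
  exact h1

set_option maxHeartbeats 2000000 in
open PicardCE in
theorem picard_iterate_unbounded
    (ν : ℕ) (hν : 2 ≤ ν) (ω : Fin ν → ℝ)
    (hω : ∀ i, ω i ∈ Set.Ioc (1 / 2 : ℝ) 1)
    (hnr : ∀ n : Fin ν → ℤ, freqQP ω n = 0 → n = 0)
    (s : ℝ) (hs0 : 0 ≤ s) (hs : s < ((ν : ℝ) - 1) / 2) :
    ¬ ∃ K : ℝ, 0 < K ∧
      ∀ a : (Fin ν → ℤ) → ℂ, (Function.support a).Finite →
      ∀ t ∈ Set.Icc (0 : ℝ) 1,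
        (∑' n : Fin ν → ℤ, (1 + heightQP n) ^ (2 * s) *
            ‖picardCoeff ω a t n‖ ^ 2) ^ ((1 : ℝ) / 2)
          ≤ K * (∑' n : Fin ν → ℤ, (1 + heightQP n) ^ (2 * s) *
              ‖a n‖ ^ 2) ^ ((3 : ℝ) / 2) := by
  rintro ⟨K, hK, hbound⟩
  obtain ⟨N', rfl⟩ : ∃ m, ν = m + 2 := ⟨ν - 2, by omega⟩
  set b : ℕ := N' + 1 with hb
  set Nr : ℝ := ((N' + 2 : ℕ) : ℝ) with hNr
  have hN1 : (1:ℝ) ≤ Nr := by rw [hNr]; push_cast; linarith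
  set C₂ : ℝ := 324 * 4^b * K^2 * ((11 * Nr^2) ^ (6*s)) with hC₂
  have h2s : (0:ℝ) ≤ 2 * s := by linarith
  have key : ∀ L : ℕ, 1 ≤ L → ((L:ℝ)) ^ (2*(b:ℝ) - 4*s) ≤ C₂ := by
    intro L hL
    have hx1 : (1:ℝ) ≤ (L:ℝ) := by exact_mod_cast hL
    have hx0 : (0:ℝ) < (L:ℝ) := by linarith
    set x : ℝ := (L:ℝ) with hxdef
    -- the support of the indicator function is finite
    have hsupp : (Function.support (aQP (N := N'+2) ω L)).Finite := by
      apply Set.Finite.subset (Sfin ω L).finite_toSet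
      intro n hn
      rw [Function.mem_support] at hn
      by_contra h
      rw [Finset.mem_coe] at h
      exact hn (by simp only [aQP, if_neg h])
    have hmain := hbound _ hsupp (1/3) ⟨by norm_num, by norm_num⟩
    -- upper bound for the data side
    have hNb : (N' + 2) - 1 = b := by omega
    have hNL1 : (1:ℤ) ≤ ((N' + 2 : ℕ):ℤ) * (L:ℤ) := by
      have h1 : (1:ℤ) ≤ ((N' + 2 : ℕ):ℤ) := by push_cast; linarith
      have h2 : (1:ℤ) ≤ (L:ℤ) := by exact_mod_cast hL
      nlinarith
    have hWa : ∀ n ∈ Sfin ω L,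
        (1 + heightQP n) ^ (2*s) * ‖aQP ω L n‖^2
          ≤ (11 * Nr^2 * x) ^ (2*s) := by
      intro n hn
      have hna : ‖aQP ω L n‖ = 1 := by simp [aQP, hn]
      rw [hna]
      norm_num
      obtain ⟨_, hco, h1, h2⟩ := mem_Sfin_props hω hL hn
      have hcoord : ∀ i, |(n i : ℝ)| ≤ ((Tv (N'+2) L : ℤ):ℝ) := by
        intro i
        have hTv : (Tv (N'+2) L : ℤ) = 10 * ((N'+2:ℕ):ℤ) * (L:ℤ) := by
          simp [Tv]
        by_cases hi : i = 0
        · subst hi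
          rw [abs_le]
          constructor
          · have hlow : -(Tv (N'+2) L) ≤ n 0 := by
              rw [hTv] at h1 ⊢
              nlinarith
            exact_mod_cast hlow
          · exact_mod_cast h2
        · obtain ⟨hc1, hc2⟩ := hco i hi
          rw [abs_le]
          have hLTv : (L:ℤ) ≤ Tv (N'+2) L := by rw [Tv]; push_cast; nlinarith
          constructor
          · have : -(Tv (N'+2) L) ≤ n i := by
              have h0 : (0:ℤ) ≤ Tv (N'+2) L := by rw [Tv]; positivity
              omega
            exact_mod_cast this
          · have : n i ≤ Tv (N'+2) L := by omega
            exact_mod_cast this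
      have hht : heightQP n ≤ Nr * ((Tv (N'+2) L : ℤ):ℝ) := heightQP_le n _ hcoord
      have hTvr : ((Tv (N'+2) L : ℤ):ℝ) = 10 * Nr * x := by
        rw [Tv, hNr, hxdef]; push_cast; ring
      have hh2 : 1 + heightQP n ≤ 11 * Nr^2 * x := by
        rw [hTvr] at hht
        nlinarith [heightQP_nonneg (N := N'+2) n]
      exact Real.rpow_le_rpow (by linarith [heightQP_nonneg (N := N'+2) n]) hh2 h2s
    have hta0 : ∀ n ∉ Sfin ω L,
        (1 + heightQP n) ^ (2*s) * ‖aQP ω L n‖^2 = 0 := by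
      intro n hn
      simp [aQP, hn]
    have htaub : (∑' n : Fin (N'+2) → ℤ, (1 + heightQP n) ^ (2 * s) *
        ‖aQP ω L n‖ ^ 2) ≤ x^b * (11 * Nr^2 * x) ^ (2*s) := by
      rw [tsum_eq_sum hta0]
      calc ∑ n ∈ Sfin ω L, (1 + heightQP n) ^ (2*s) * ‖aQP ω L n‖^2
          ≤ (Sfin ω L).card • ((11 * Nr^2 * x) ^ (2*s)) :=
            Finset.sum_le_card_nsmul _ _ _ hWa
        _ = x^b * (11 * Nr^2 * x) ^ (2*s) := by
            rw [card_Sfin, hNb, nsmul_eq_mul, hxdef]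
            push_cast
            ring
    -- lower bound for the iterate side
    have htc0 : ∀ n ∉ Ofin ω L,
        (1 + heightQP n) ^ (2*s) * ‖picardCoeff ω (aQP ω L) (1/3) n‖^2 = 0 := by
      intro n hn
      rw [picard_eq_zero hn]
      simp
    have htclb : x ^ (2*s) * (∑ n ∈ Ofin ω L, ((countT ω L n : ℝ))^2) / 36
        ≤ (∑' n : Fin (N'+2) → ℤ, (1 + heightQP n) ^ (2 * s) *
            ‖picardCoeff ω (aQP ω L) (1/3) n‖ ^ 2) := by
      rw [tsum_eq_sum htc0]
      have hterm : ∀ n ∈ Ofin ω L,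
          x ^ (2*s) * (((countT ω L n : ℝ))/6)^2
            ≤ (1 + heightQP n) ^ (2*s) * ‖picardCoeff ω (aQP ω L) (1/3) n‖^2 := by
        intro n hn
        have hn0 : (L:ℤ) ≤ n 0 := (mem_Ofin_props hω hL hn).2.2
        have hwt : x ≤ 1 + heightQP n := by
          have h1 : x ≤ ((n 0:ℤ):ℝ) := by rw [hxdef]; exact_mod_cast hn0
          have h2 := heightQP_ge_zero_coord (N := N'+2) n
          linarith
        have hw : x ^ (2*s) ≤ (1 + heightQP n) ^ (2*s) :=
          Real.rpow_le_rpow hx0.le hwt h2s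
        have hre := picard_re_ge hω hL n
        have hcnt : ((countT ω L n : ℝ))/6 ≤ ‖picardCoeff ω (aQP ω L) (1/3) n‖ := by
          calc ((countT ω L n : ℝ))/6 ≤ (picardCoeff ω (aQP ω L) (1/3) n).re := hre
            _ ≤ |(picardCoeff ω (aQP ω L) (1/3) n).re| := le_abs_self _
            _ ≤ ‖picardCoeff ω (aQP ω L) (1/3) n‖ := Complex.abs_re_le_norm _
        have hsq : (((countT ω L n : ℝ))/6)^2 ≤ ‖picardCoeff ω (aQP ω L) (1/3) n‖^2 :=
          pow_le_pow_left₀ (div_nonneg (Nat.cast_nonneg _) (by norm_num)) hcnt 2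
        exact mul_le_mul hw hsq (sq_nonneg _)
          (Real.rpow_nonneg (by linarith [heightQP_nonneg (N := N'+2) n]) _)
      calc x ^ (2*s) * (∑ n ∈ Ofin ω L, ((countT ω L n : ℝ))^2) / 36
          = ∑ n ∈ Ofin ω L, x ^ (2*s) * (((countT ω L n : ℝ))/6)^2 := by
            rw [Finset.mul_sum, Finset.sum_div]
            refine Finset.sum_congr rfl fun n _ => ?_
            ring
        _ ≤ _ := Finset.sum_le_sum hterm
    -- Cauchy-Schwarz and cardinality of the output set
    have hSnn : (0:ℝ) ≤ ∑ n ∈ Ofin ω L, ((countT ω L n : ℝ))^2 :=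
      Finset.sum_nonneg fun n _ => sq_nonneg _
    have hcardO : (((Ofin ω L).card : ℕ) : ℝ) ≤ 9 * 4^b * x^b := by
      have h1 := card_Ofin hω hL
      have h2 : ((3 * L + 1 : ℕ):ℝ) ≤ 4 * x := by push_cast [hxdef]; linarith
      calc (((Ofin ω L).card : ℕ) : ℝ) ≤ ((9 * (3 * L + 1) ^ ((N'+2) - 1) : ℕ) : ℝ) := by
            exact_mod_cast h1
        _ = 9 * (((3 * L + 1:ℕ):ℝ)) ^ b := by rw [hNb]; push_cast; ring
        _ ≤ 9 * (4 * x) ^ b := by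
            have := pow_le_pow_left₀ (Nat.cast_nonneg _) h2 b
            nlinarith [this]
        _ = 9 * 4^b * x^b := by rw [mul_pow]; ring
    have hsumcnt : ∑ n ∈ Ofin ω L, ((countT ω L n : ℝ)) = (x^b)^3 := by
      have h := sum_count (ω := ω) (L := L)
      rw [hNb] at h
      rw [hxdef]
      exact_mod_cast h
    have hP : (x^b)^6 ≤ (9 * 4^b * x^b) * (∑ n ∈ Ofin ω L, ((countT ω L n : ℝ))^2) := by
      have hcs := sq_sum_le_card_mul_sum_sq (s := Ofin ω L)
        (f := fun n => ((countT ω L n : ℝ)))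
      rw [hsumcnt] at hcs
      have h1 : ((x^b)^3)^2 = (x^b)^6 := by ring
      rw [h1] at hcs
      calc (x^b)^6 ≤ ((Ofin ω L).card : ℝ) * ∑ n ∈ Ofin ω L, ((countT ω L n : ℝ))^2 := hcs
        _ ≤ (9 * 4^b * x^b) * ∑ n ∈ Ofin ω L, ((countT ω L n : ℝ))^2 :=
            mul_le_mul_of_nonneg_right hcardO hSnn
    -- square the main inequality
    have hterm_nn : ∀ (f : (Fin (N'+2) → ℤ) → ℂ) (n : Fin (N'+2) → ℤ),
        0 ≤ (1 + heightQP n) ^ (2 * s) * ‖f n‖ ^ 2 := fun f n =>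
      mul_nonneg (Real.rpow_nonneg (by linarith [heightQP_nonneg (N := N'+2) n]) _)
        (pow_nonneg (norm_nonneg _) 2)
    have hta_nn : 0 ≤ (∑' n : Fin (N'+2) → ℤ, (1 + heightQP n) ^ (2 * s) *
        ‖aQP ω L n‖ ^ 2) := tsum_nonneg fun n => hterm_nn _ n
    have htc_nn : 0 ≤ (∑' n : Fin (N'+2) → ℤ, (1 + heightQP n) ^ (2 * s) *
        ‖picardCoeff ω (aQP ω L) (1/3) n‖ ^ 2) := tsum_nonneg fun n => hterm_nn _ n
    have hsqmain := sq_helper htc_nn hta_nn hK.le hmain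
    have hchain : x ^ (2*s) * (∑ n ∈ Ofin ω L, ((countT ω L n : ℝ))^2) / 36
        ≤ K^2 * (x^b * (11 * Nr^2 * x) ^ (2*s))^3 := by
      refine le_trans (le_trans htclb hsqmain) ?_
      exact mul_le_mul_of_nonneg_left (pow_le_pow_left₀ hta_nn htaub 3) (sq_nonneg K)
    -- final algebra
    have hW63 : (((11 * Nr^2 * x) ^ (2*s))^3) = (11 * Nr^2) ^ (6*s) * x ^ (6*s) := by
      have hpos : (0:ℝ) ≤ 11 * Nr^2 * x := by positivity
      rw [← Real.rpow_natCast ((11 * Nr^2 * x) ^ (2*s)) 3, ← Real.rpow_mul hpos]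
      rw [show (2*s) * ((3:ℕ):ℝ) = 6*s by push_cast; ring]
      exact Real.mul_rpow (by positivity) hx0.le
    have hbig : x ^ (2*s) * (x^b)^6
        ≤ C₂ * ((x^b)^4 * x ^ (6*s)) := by
      have h1 : x ^ (2*s) * (x^b)^6
          ≤ x ^ (2*s) * ((9 * 4^b * x^b) * (∑ n ∈ Ofin ω L, ((countT ω L n : ℝ))^2)) :=
        mul_le_mul_of_nonneg_left hP (Real.rpow_nonneg hx0.le _)
      have h2 : x ^ (2*s) * ((9 * 4^b * x^b) * (∑ n ∈ Ofin ω L, ((countT ω L n : ℝ))^2))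
          = (324 * 4^b * x^b) * (x ^ (2*s) * (∑ n ∈ Ofin ω L, ((countT ω L n : ℝ))^2) / 36) := by
        ring
      have h3 : (324 * 4^b * x^b) * (x ^ (2*s) * (∑ n ∈ Ofin ω L, ((countT ω L n : ℝ))^2) / 36)
          ≤ (324 * 4^b * x^b) * (K^2 * (x^b * (11 * Nr^2 * x) ^ (2*s))^3) := by
        apply mul_le_mul_of_nonneg_left hchain
        positivity
      have h4 : (324 * 4^b * x^b) * (K^2 * (x^b * (11 * Nr^2 * x) ^ (2*s))^3)
          = C₂ * ((x^b)^4 * x ^ (6*s)) := by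
        rw [mul_pow, hW63, hC₂]
        ring
      linarith
    have hid : x ^ (2*s) * (x^b)^6 = x ^ (2*(b:ℝ) - 4*s) * ((x^b)^4 * x ^ (6*s)) := by
      rw [← pow_mul, ← pow_mul,
        show ((x:ℝ)^(b*6)) = x ^ (((b*6:ℕ)):ℝ) from (Real.rpow_natCast x (b*6)).symm,
        show ((x:ℝ)^(b*4)) = x ^ (((b*4:ℕ)):ℝ) from (Real.rpow_natCast x (b*4)).symm,
        ← Real.rpow_add hx0, ← Real.rpow_add hx0, ← Real.rpow_add hx0]
      congr 1
      push_cast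
      ring
    rw [hid] at hbig
    have hEpos : (0:ℝ) < (x^b)^4 * x ^ (6*s) := by positivity
    exact le_of_mul_le_mul_right hbig hEpos
  -- conclude by letting `L → ∞`
  have hexp : 0 < 2*(b:ℝ) - 4*s := by
    have hcast : ((N' + 2 : ℕ) : ℝ) - 1 = (b:ℝ) := by rw [hb]; push_cast; ring
    rw [hcast] at hs
    linarith
  have htend : Filter.Tendsto (fun L : ℕ => ((L:ℝ)) ^ (2*(b:ℝ) - 4*s)) atTop atTop :=
    (tendsto_rpow_atTop hexp).comp tendsto_natCast_atTop_atTop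
  obtain ⟨L, hLgt, hL1⟩ :=
    ((htend.eventually_gt_atTop C₂).and (Filter.eventually_ge_atTop 1)).exists
  exact absurd (key L hL1) (not_le.mpr hLgt)
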